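/- Let A be a real symmetric matrix indexed by (Fin p × Fin q) that is block tridiagonal (A_{(i,j),(i',j')} ≠ 0 implies |i − i'| ≤ 1). If for every index the row sum of the partial transpose A^pT equals the corresponding row sum of A, then every q×q block A^{i,k} (with entries (A^{i,k})_{j,l} = A_{(i,j),(k,l)}) is line sum symmetric. -/
import Mathlib


open Matrix BigOperators Kronecker
open scoped ComplexOrder

noncomputable section

/-- The `(p,q)`-partial transpose of a matrix indexed by `Fin p × Fin q`:
`A^pT_{(i,j),(k,l)} = A_{(i,l),(k,j)}`. -/
def ptrans {p q : ℕ} {α : Type*} (A : Matrix (Fin p × Fin q) (Fin p × Fin q) α) :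
    Matrix (Fin p × Fin q) (Fin p × Fin q) α :=
  fun x y => A (x.1, y.2) (y.1, x.2)

/-- A density matrix: Hermitian, positive semidefinite, with trace 1. -/
def IsDensityMatrix {n : Type*} [Fintype n] (ρ : Matrix n n ℂ) : Prop :=
  ρ.IsHermitian ∧ ρ.PosSemidef ∧ ρ.trace = 1

/-- Separability in ℂ^p ⊗ ℂ^q : a finite convex combination of Kronecker products
of density matrices. -/
def SeparableState {p q : ℕ} (A : Matrix (Fin p × Fin q) (Fin p × Fin q) ℂ) : Prop :=
  ∃ (m : ℕ) (c : Fin m → ℝ) (ρ : Fin m → Matrix (Fin p) (Fin p) ℂ)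
    (η : Fin m → Matrix (Fin q) (Fin q) ℂ),
    (∀ i, 0 ≤ c i) ∧ (∑ i, c i) = 1 ∧
    (∀ i, IsDensityMatrix (ρ i)) ∧ (∀ i, IsDensityMatrix (η i)) ∧
    A = ∑ i, (c i : ℂ) • (ρ i ⊗ₖ η i)

/-- Separability of a real matrix, viewed as a complex matrix. -/
def SeparableStateR {p q : ℕ} (A : Matrix (Fin p × Fin q) (Fin p × Fin q) ℝ) : Prop :=
  SeparableState (A.map (fun x => (x : ℂ)))

/-- A square real matrix is line sum symmetric if each row sum equals the
corresponding column sum. -/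
def LineSumSymm {q : ℕ} (B : Matrix (Fin q) (Fin q) ℝ) : Prop :=
  ∀ j, (∑ l, B j l) = ∑ l, B l j

/-- A simple circuit matrix: there are distinct indices `i_1, …, i_k` (`k ≥ 1`) with
`C_{i_m i_{m+1}} = 1` (cyclically) and all other entries 0. -/
def IsSimpleCircuit {q : ℕ} (C : Matrix (Fin q) (Fin q) ℝ) : Prop :=
  ∃ (k : ℕ) (hk : 0 < k) (f : Fin k → Fin q), Function.Injective f ∧
    ∀ a b : Fin q, C a b =
      if ∃ m : Fin k, a = f m ∧ b = f ⟨((m : ℕ) + 1) % k, Nat.mod_lt _ hk⟩ then 1 else 0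

/-- The 2q×2q block matrix `[[A11, A12], [A21, A22]]` indexed by `Fin 2 × Fin q`. -/
def twoBlock {q : ℕ} {α : Type*} (A11 A12 A21 A22 : Matrix (Fin q) (Fin q) α) :
    Matrix (Fin 2 × Fin q) (Fin 2 × Fin q) α :=
  fun a b =>
    if a.1 = 0 then (if b.1 = 0 then A11 a.2 b.2 else A12 a.2 b.2)
    else (if b.1 = 0 then A21 a.2 b.2 else A22 a.2 b.2)

/-- The q×q block `A^{i,k}` of a matrix indexed by `Fin p × Fin q`. -/
def blockOf {p q : ℕ} (A : Matrix (Fin p × Fin q) (Fin p × Fin q) ℝ) (i k : Fin p) :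
    Matrix (Fin q) (Fin q) ℝ :=
  fun j l => A (i, j) (k, l)

/-- a real symmetric block tridiagonal matrix whose partial transpose
has the same row sums has all its q×q blocks line sum symmetric. -/
theorem stmt13 {p q : ℕ} (A : Matrix (Fin p × Fin q) (Fin p × Fin q) ℝ)
    (hsymm : A.IsSymm)
    (htri : ∀ x y : Fin p × Fin q, A x y ≠ 0 → |(x.1 : ℤ) - (y.1 : ℤ)| ≤ 1)
    (hpt : ∀ x, (∑ y, ptrans A x y) = ∑ y, A x y) :
    ∀ i k : Fin p, LineSumSymm (blockOf A i k) := by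
  intro i k j
  set F : Fin p → Fin p → ℝ := fun a b => ∑ l, A (a, j) (b, l) with hFdef
  have hsym : ∀ x y, A x y = A y x := by
    intro x y
    have := congrFun (congrFun hsymm y) x
    simpa [Matrix.transpose_apply] using this
  have hF0 : ∀ a b : Fin p, ((a : ℕ) + 1 < (b : ℕ) ∨ (b : ℕ) + 1 < (a : ℕ)) → F a b = 0 := by
    intro a b h
    apply Finset.sum_eq_zero
    intro l _
    by_contra hne
    have h2 := htri (a, j) (b, l) hne
    simp only [abs_le] at h2
    omega
  have hrow : ∀ a : Fin p, (∑ b, F b a) = ∑ b, F a b := by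
    intro a
    have h := hpt (a, j)
    rw [Fintype.sum_prod_type, Fintype.sum_prod_type] at h
    have h1 : (∑ b, F b a) = ∑ x : Fin p, ∑ y : Fin q, ptrans A (a, j) (x, y) := by
      apply Finset.sum_congr rfl
      intro x _
      apply Finset.sum_congr rfl
      intro y _
      show A (x, j) (a, y) = A (a, y) (x, j)
      exact hsym _ _
    rw [h1, h]
  have key : ∀ n : ℕ, ∀ a b : Fin p, (a : ℕ) = n → (b : ℕ) = n + 1 → F a b = F b a := by
    intro n
    induction n using Nat.strong_induction_on with
    | _ n ih =>
      intro a b ha hb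
      have hsum : (∑ c, (F a c - F c a)) = 0 := by
        rw [Finset.sum_sub_distrib, hrow a, sub_self]
      have hsingle : (∑ c, (F a c - F c a)) = F a b - F b a := by
        apply Finset.sum_eq_single
        · intro c _ hcb
          have hcb' : (c : ℕ) ≠ (b : ℕ) := fun h => hcb (Fin.ext h)
          rcases Nat.lt_trichotomy (c : ℕ) n with hlt | heq | hgt
          · rcases Nat.eq_or_lt_of_le (Nat.succ_le_of_lt hlt) with he | hl
            · -- c.val + 1 = n
              have := ih (c : ℕ) (by omega) c a rfl (by omega)
              rw [this, sub_self]
            · -- c.val + 1 < n : far away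
              rw [hF0 a c (by omega), hF0 c a (by omega), sub_self]
          · have : c = a := Fin.ext (by omega)
            rw [this, sub_self]
          · -- c.val > n, and c.val ≠ n+1, so c.val > n+1
            have : n + 1 < (c : ℕ) := by omega
            rw [hF0 a c (by omega), hF0 c a (by omega), sub_self]
        · intro hb'
          exact absurd (Finset.mem_univ b) hb'
      have hkey : F a b = F b a := by
        have := hsingle ▸ hsum
        linarith
      exact hkey
  have hR : (∑ l, A (i, l) (k, j)) = F k i := by
    apply Finset.sum_congr rfl
    intro l _
    exact hsym _ _
  show (∑ l, A (i, j) (k, l)) = ∑ l, A (i, l) (k, j)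
  rw [hR]
  show F i k = F k i
  rcases Nat.lt_trichotomy (i : ℕ) (k : ℕ) with h | h | h
  · rcases Nat.eq_or_lt_of_le (Nat.succ_le_of_lt h) with he | hl
    · exact key (i : ℕ) i k rfl he.symm
    · rw [hF0 i k (by omega), hF0 k i (by omega)]
  · have : i = k := Fin.ext h
    rw [this]
  · rcases Nat.eq_or_lt_of_le (Nat.succ_le_of_lt h) with he | hl
    · exact (key (k : ℕ) k i rfl he.symm).symm
    · rw [hF0 i k (by omega), hF0 k i (by omega)]
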